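/- Let F ⊆ ℝ be a compact set, regarded as a subset of a line in ℝ². Then the lower box dimension of the triangle set satisfies lower-dim_B Δ(F) ≥ 2 · lower-dim_B F. -/

import Mathlib

open Metric Set Filter
open Topology

/-- The triangle set of `F ⊆ ℝ²`:
`Δ(F) = {(|x−y|, |z−y|, |x−z|) : x, y, z ∈ F} ⊆ ℝ³`. -/
def triangleSet (F : Set (EuclideanSpace ℝ (Fin 2))) : Set (ℝ × ℝ × ℝ) :=
  {p | ∃ x ∈ F, ∃ y ∈ F, ∃ z ∈ F, p = (dist x y, dist z y, dist x z)}

/-- Minimal number of closed balls of radius `δ` needed to cover `A`. -/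
noncomputable def covN {E : Type*} [PseudoMetricSpace E] (A : Set E) (δ : ℝ) : ℕ :=
  sInf {k : ℕ | ∃ t : Finset E, t.card = k ∧ A ⊆ ⋃ x ∈ t, Metric.closedBall x δ}

/-- The lower box dimension of a set. -/
noncomputable def lowerBoxDim {E : Type*} [PseudoMetricSpace E] (A : Set E) : ℝ :=
  Filter.liminf (fun δ : ℝ => Real.log (covN A δ) / -Real.log δ) (nhdsWithin 0 (Set.Ioi 0))

/-- The embedding of `ℝ` into `ℝ²` as the horizontal axis, `t ↦ (t, 0)`. -/
noncomputable def lineEmb (t : ℝ) : EuclideanSpace ℝ (Fin 2) :=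
  (WithLp.equiv 2 (Fin 2 → ℝ)).symm ![t, 0]

section aux
variable {E : Type*} [PseudoMetricSpace E] {A : Set E} {δ : ℝ}

lemma covN_le_card (t : Finset E) (h : A ⊆ ⋃ x ∈ t, closedBall x δ) :
    covN A δ ≤ t.card :=
  Nat.sInf_le ⟨t, rfl, h⟩

lemma covSet_nonempty (hA : TotallyBounded A) (hδ : 0 < δ) :
    {k : ℕ | ∃ t : Finset E, t.card = k ∧ A ⊆ ⋃ x ∈ t, closedBall x δ}.Nonempty := by
  obtain ⟨t, htf, hts⟩ := totallyBounded_iff.1 hA δ hδ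
  refine ⟨htf.toFinset.card, htf.toFinset, rfl, hts.trans ?_⟩
  refine iUnion₂_subset fun y hy => ?_
  exact (ball_subset_closedBall).trans
    (subset_iUnion₂ (s := fun x _ => closedBall x δ) y (htf.mem_toFinset.2 hy))

lemma exists_min_cover (hA : TotallyBounded A) (hδ : 0 < δ) :
    ∃ t : Finset E, t.card = covN A δ ∧ A ⊆ ⋃ x ∈ t, closedBall x δ :=
  Nat.sInf_mem (covSet_nonempty hA hδ)

lemma one_le_covN (hA : TotallyBounded A) (hne : A.Nonempty) (hδ : 0 < δ) :
    1 ≤ covN A δ := by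
  obtain ⟨t, htc, hts⟩ := exists_min_cover hA hδ
  rcases hne with ⟨a, ha⟩
  by_contra h
  have : covN A δ = 0 := by omega
  rw [this, Finset.card_eq_zero] at htc
  subst htc
  simpa using hts ha

lemma covN_mono {B : Set E} (hB : TotallyBounded B) (hAB : A ⊆ B) (hδ : 0 < δ) :
    covN A δ ≤ covN B δ := by
  obtain ⟨t, htc, hts⟩ := exists_min_cover hB hδ
  exact htc ▸ covN_le_card t (hAB.trans hts)

lemma covN_image_le {E' : Type*} [PseudoMetricSpace E'] {L : E → E'} (hL : LipschitzWith 1 L)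
    {B : Set E'} (hB : B ⊆ L '' A) (hA : TotallyBounded A) (hδ : 0 < δ) :
    covN B δ ≤ covN A δ := by
  classical
  obtain ⟨t, htc, hts⟩ := exists_min_cover hA hδ
  calc covN B δ ≤ (t.image L).card := by
        refine covN_le_card _ fun b hb => ?_
        obtain ⟨a, ha, rfl⟩ := hB hb
        obtain ⟨x, hx⟩ := mem_iUnion₂.1 (hts ha)
        refine mem_iUnion₂.2 ⟨L x, Finset.mem_image_of_mem L hx.1, ?_⟩
        simp only [mem_closedBall] at hx ⊢
        calc dist (L a) (L x) ≤ dist a x := by simpa using hL.dist_le_mul a x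
          _ ≤ δ := hx.2
    _ ≤ t.card := Finset.card_image_le
    _ = covN A δ := htc

lemma card_le_covN_of_separated (hA : TotallyBounded A) (hδ : 0 < δ) (s : Finset E)
    (hsA : ↑s ⊆ A) (hsep : ∀ x ∈ s, ∀ y ∈ s, x ≠ y → 2 * δ < dist x y) :
    s.card ≤ covN A δ := by
  classical
  obtain ⟨t, htc, hts⟩ := exists_min_cover hA hδ
  rw [← htc]
  have hpick : ∀ x ∈ s, ∃ c ∈ t, dist x c ≤ δ := by
    intro x hx
    obtain ⟨c, hc⟩ := mem_iUnion₂.1 (hts (hsA hx))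
    exact ⟨c, hc.1, by simpa using hc.2⟩
  choose f hf1 hf2 using hpick
  refine Finset.card_le_card_of_injOn (fun x => if hx : x ∈ s then f x hx else x)
    (fun x hx => by simp only [Finset.mem_coe] at hx ⊢; rw [dif_pos hx]; exact hf1 x hx) ?_
  intro x hx y hy hxy
  simp only [Finset.mem_coe] at hx hy
  simp only [dif_pos hx, dif_pos hy] at hxy
  by_contra hne
  have hd : dist x y ≤ 2 * δ := by
    calc dist x y ≤ dist x (f x hx) + dist (f x hx) y := dist_triangle _ _ _
      _ = dist x (f x hx) + dist (f y hy) y := by rw [hxy]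
      _ ≤ δ + δ := add_le_add (hf2 x hx) (by rw [dist_comm]; exact hf2 y hy)
      _ = 2 * δ := by ring
  linarith [hsep x hx y hy hne]

lemma exists_maximal_sep (hA : TotallyBounded A) (hδ : 0 < δ) :
    ∃ s : Finset E, ↑s ⊆ A ∧ (∀ x ∈ s, ∀ y ∈ s, x ≠ y → 2 * δ < dist x y) ∧
      A ⊆ ⋃ x ∈ s, closedBall x (2 * δ) := by
  classical
  set S : Set ℕ := {n | ∃ s : Finset E, ↑s ⊆ A ∧
    (∀ x ∈ s, ∀ y ∈ s, x ≠ y → 2 * δ < dist x y) ∧ s.card = n} with hS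
  have h0 : 0 ∈ S := ⟨∅, by simp⟩
  have hbdd : BddAbove S := by
    refine ⟨covN A δ, fun n hn => ?_⟩
    obtain ⟨s, h1, h2, h3⟩ := hn
    exact h3 ▸ card_le_covN_of_separated hA hδ s h1 h2
  obtain ⟨s, hsA, hsep, hcard⟩ := Nat.sSup_mem ⟨0, h0⟩ hbdd
  refine ⟨s, hsA, hsep, fun y hy => ?_⟩
  by_contra hyc
  have hfar : ∀ p ∈ s, 2 * δ < dist y p := by
    intro p hp
    by_contra h
    exact hyc (mem_iUnion₂.2 ⟨p, hp, by simpa using not_lt.1 h⟩)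
  have hys : y ∉ s := fun h => by
    have := hfar y h; simp at this; linarith
  have hmem : s.card + 1 ∈ S := by
    refine ⟨insert y s, ?_, ?_, by rw [Finset.card_insert_of_notMem hys]⟩
    · intro x hx
      rcases Finset.mem_insert.1 (by exact_mod_cast hx) with rfl | hx'
      · exact hy
      · exact hsA hx'
    · intro x hx z hz hne
      rcases Finset.mem_insert.1 hx with rfl | hx' <;>
        rcases Finset.mem_insert.1 hz with rfl | hz'
      · exact absurd rfl hne
      · exact hfar z hz'
      · rw [dist_comm]; exact hfar x hx'
      · exact hsep x hx' z hz' hne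
  have := le_csSup hbdd hmem
  omega

lemma covN_prod_le {E' : Type*} [PseudoMetricSpace E'] {B : Set E'}
    (hA : TotallyBounded A) (hB : TotallyBounded B) (hδ : 0 < δ) :
    covN (A ×ˢ B) δ ≤ covN A δ * covN B δ := by
  classical
  obtain ⟨t, htc, hts⟩ := exists_min_cover hA hδ
  obtain ⟨u, huc, hus⟩ := exists_min_cover hB hδ
  rw [← htc, ← huc, ← Finset.card_product]
  refine covN_le_card (t ×ˢ u) ?_
  rintro ⟨a, b⟩ ⟨ha, hb⟩
  obtain ⟨x, hx⟩ := mem_iUnion₂.1 (hts ha)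
  obtain ⟨y, hy⟩ := mem_iUnion₂.1 (hus hb)
  refine mem_iUnion₂.2 ⟨(x, y), Finset.mem_product.2 ⟨hx.1, hy.1⟩, ?_⟩
  simp only [mem_closedBall] at hx hy ⊢
  rw [Prod.dist_eq]
  exact max_le hx.2 hy.2

end aux

lemma covN_Icc_le {a b δ : ℝ} (hab : a ≤ b) (hδ : 0 < δ) :
    (covN (Icc a b) δ : ℝ) ≤ (b - a) / (2 * δ) + 1 := by
  classical
  set n : ℕ := ⌊(b - a) / (2 * δ)⌋₊ with hn
  have hcov : Icc a b ⊆ ⋃ x ∈ (Finset.range (n + 1)).image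
      (fun k : ℕ => a + δ + 2 * δ * k), closedBall x δ := by
    intro x hx
    obtain ⟨hxa, hxb⟩ := hx
    set k : ℕ := ⌊(x - a) / (2 * δ)⌋₊ with hk
    have h2δ : (0:ℝ) < 2 * δ := by linarith
    have hkn : k ≤ n := Nat.floor_le_floor (by gcongr)
    have hk1 : (k : ℝ) ≤ (x - a) / (2 * δ) :=
      Nat.floor_le (div_nonneg (by linarith) (by linarith))
    have hk2 : (x - a) / (2 * δ) < k + 1 := Nat.lt_floor_add_one _
    have hk1' : 2 * δ * k ≤ x - a := by
      have := (le_div_iff₀ h2δ).1 hk1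
      linarith
    have hk2' : x - a < 2 * δ * (k + 1) := by
      have := (div_lt_iff₀ h2δ).1 hk2
      linarith
    refine mem_iUnion₂.2 ⟨a + δ + 2 * δ * k, Finset.mem_image.2
      ⟨k, Finset.mem_range.2 (by omega), rfl⟩, ?_⟩
    simp only [mem_closedBall, Real.dist_eq]
    rw [abs_le]
    constructor <;> nlinarith
  have hcard := covN_le_card _ hcov
  have h1 : ((Finset.range (n + 1)).image (fun k : ℕ => a + δ + 2 * δ * k)).card ≤ n + 1 := by
    exact (Finset.card_image_le).trans (by simp)
  have h2 : (n : ℝ) ≤ (b - a) / (2 * δ) :=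
    Nat.floor_le (div_nonneg (by linarith) (by linarith))
  have := hcard.trans h1
  calc (covN (Icc a b) δ : ℝ) ≤ (n : ℝ) + 1 := by exact_mod_cast this
    _ ≤ (b - a) / (2 * δ) + 1 := by linarith

lemma lineEmb_apply (a : ℝ) : lineEmb a 0 = a ∧ lineEmb a 1 = 0 := by
  constructor <;> simp [lineEmb, WithLp.equiv_symm_apply]

lemma lineEmb_dist (a b : ℝ) : dist (lineEmb a) (lineEmb b) = dist a b := by
  rw [EuclideanSpace.dist_eq, Fin.sum_univ_two, (lineEmb_apply a).1, (lineEmb_apply a).2,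
    (lineEmb_apply b).1, (lineEmb_apply b).2]
  simp [Real.sqrt_sq_eq_abs, Real.dist_eq]

lemma triangleSet_totallyBounded {F : Set ℝ} (hF : IsCompact F) :
    TotallyBounded (triangleSet (lineEmb '' F)) := by
  have hφ : Continuous (fun p : ℝ × ℝ × ℝ => (|p.1 - p.2.1|, |p.2.2 - p.2.1|, |p.1 - p.2.2|)) := by
    fun_prop
  have hcomp : IsCompact ((fun p : ℝ × ℝ × ℝ => (|p.1 - p.2.1|, |p.2.2 - p.2.1|, |p.1 - p.2.2|)) ''
      (F ×ˢ F ×ˢ F)) := ((hF.prod (hF.prod hF)).image hφ)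
  refine TotallyBounded.subset ?_ hcomp.totallyBounded
  rintro p ⟨x, ⟨x', hx', rfl⟩, y, ⟨y', hy', rfl⟩, z, ⟨z', hz', rfl⟩, rfl⟩
  exact ⟨(x', y', z'), ⟨hx', hy', hz'⟩, by simp [lineEmb_dist, Real.dist_eq]⟩

lemma key_count {F : Set ℝ} (hF : IsCompact F) (hne : F.Nonempty) {δ : ℝ} (hδ : 0 < δ) :
    covN F (2 * δ) ^ 2 ≤ covN (triangleSet (lineEmb '' F)) δ := by
  classical
  set x₀ := sInf F with hx₀def
  have hx₀F : x₀ ∈ F := hF.sInf_mem hne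
  have hx₀le : ∀ y ∈ F, x₀ ≤ y := fun y hy => csInf_le hF.bddBelow hy
  obtain ⟨s, hsA, hsep, hcov⟩ := exists_maximal_sep hF.totallyBounded hδ
  have h1 : covN F (2 * δ) ≤ s.card := covN_le_card s hcov
  have hsep2 : ∀ p ∈ s ×ˢ s, ∀ q ∈ s ×ˢ s, p ≠ q → 2 * δ < dist p q := by
    intro p hp q hq hne'
    rw [Finset.mem_product] at hp hq
    rw [Prod.dist_eq]
    rcases (not_and_or.1 (Prod.ext_iff.not.1 hne')) with h1' | h2'
    · exact lt_max_of_lt_left (hsep _ hp.1 _ hq.1 h1')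
    · exact lt_max_of_lt_right (hsep _ hp.2 _ hq.2 h2')
  have h2 : (s ×ˢ s).card ≤ covN (F ×ˢ F) δ := by
    refine card_le_covN_of_separated (hF.prod hF).totallyBounded hδ _ ?_ hsep2
    intro p hp
    rw [Finset.coe_product] at hp
    exact ⟨hsA hp.1, hsA hp.2⟩
  set ψ : ℝ × ℝ × ℝ → ℝ × ℝ := fun p => (p.1 + x₀, p.2.2 + x₀) with hψ
  have hL : LipschitzWith 1 ψ := by
    rw [lipschitzWith_iff_dist_le_mul]
    intro p q
    rw [NNReal.coe_one, one_mul]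
    simp only [hψ, Prod.dist_eq]
    refine max_le ?_ ?_
    · simp [Real.dist_eq]
    · simpa [Real.dist_eq] using
        (le_max_right (dist p.2.1 q.2.1) (dist p.2.2 q.2.2)).trans
          (le_max_right (dist p.1 q.1) _)
  have hsub : F ×ˢ F ⊆ ψ '' (triangleSet (lineEmb '' F)) := by
    rintro ⟨y, z⟩ ⟨hy, hz⟩
    refine ⟨(dist (lineEmb x₀) (lineEmb y), dist (lineEmb z) (lineEmb y),
      dist (lineEmb x₀) (lineEmb z)), ⟨lineEmb x₀, ⟨x₀, hx₀F, rfl⟩, lineEmb y, ⟨y, hy, rfl⟩,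
      lineEmb z, ⟨z, hz, rfl⟩, rfl⟩, ?_⟩
    simp only [hψ, lineEmb_dist, Real.dist_eq]
    have h1 := hx₀le y hy
    have h2 := hx₀le z hz
    rw [abs_of_nonpos (by linarith), abs_of_nonpos (by linarith)]
    simp [Prod.ext_iff]
  have h3 : covN (F ×ˢ F) δ ≤ covN (triangleSet (lineEmb '' F)) δ :=
    covN_image_le hL hsub (triangleSet_totallyBounded hF) hδ
  calc covN F (2 * δ) ^ 2 ≤ s.card ^ 2 := Nat.pow_le_pow_left h1 2
    _ = (s ×ˢ s).card := by rw [Finset.card_product]; ring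
    _ ≤ covN (F ×ˢ F) δ := h2
    _ ≤ covN (triangleSet (lineEmb '' F)) δ := h3

set_option maxHeartbeats 1000000 in
theorem lowerBoxDim_triangleSet_line (F : Set ℝ) (hF : IsCompact F) :
    2 * lowerBoxDim F ≤ lowerBoxDim (triangleSet (lineEmb '' F)) := by
  rcases F.eq_empty_or_nonempty with rfl | hne
  · have h1 : ∀ δ : ℝ, covN (∅ : Set ℝ) δ = 0 := fun δ =>
      Nat.sInf_eq_zero.2 (Or.inl ⟨∅, by simp⟩)
    have h2 : triangleSet (lineEmb '' (∅ : Set ℝ)) = ∅ := by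
      simp [triangleSet]
    have h3 : ∀ δ : ℝ, covN (∅ : Set (ℝ × ℝ × ℝ)) δ = 0 := fun δ =>
      Nat.sInf_eq_zero.2 (Or.inl ⟨∅, by simp⟩)
    rw [lowerBoxDim, lowerBoxDim, h2]
    simp only [h1, h3, Nat.cast_zero, Real.log_zero, zero_div, liminf_const]
    norm_num
  set l := nhdsWithin (0:ℝ) (Ioi 0) with hl
  set Δ := triangleSet (lineEmb '' F) with hΔdef
  set g : ℝ → ℝ := fun δ => Real.log (covN F δ) / -Real.log δ with hg
  set f : ℝ → ℝ := fun δ => Real.log (covN Δ δ) / -Real.log δ with hf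
  have hgoal : lowerBoxDim F = liminf g l := rfl
  have hgoal2 : lowerBoxDim Δ = liminf f l := rfl
  rw [hgoal, hgoal2]
  clear_value g f
  have hΔne : Δ.Nonempty := by
    obtain ⟨x, hx⟩ := hne
    exact ⟨_, lineEmb x, ⟨x, hx, rfl⟩, lineEmb x, ⟨x, hx, rfl⟩, lineEmb x, ⟨x, hx, rfl⟩, rfl⟩
  have hΔtb : TotallyBounded Δ := hΔdef ▸ triangleSet_totallyBounded hF
  have hFtb := hF.totallyBounded
  obtain ⟨lo, hi, hsub⟩ : ∃ lo hi, F ⊆ Icc lo hi :=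
    ⟨sInf F, sSup F, fun x hx => ⟨csInf_le hF.bddBelow hx, le_csSup hF.bddAbove hx⟩⟩
  set M := hi - lo with hMdef
  have hM : 0 ≤ M := by
    obtain ⟨x, hx⟩ := hne
    have := hsub hx
    simp only [hMdef]
    linarith [this.1, this.2]
  set C := M / 2 + 1 with hC
  have hC1 : (1:ℝ) ≤ C := by simp only [hC]; linarith
  have hΔsub : Δ ⊆ Icc 0 M ×ˢ (Icc 0 M ×ˢ Icc 0 M) := by
    have hb : ∀ u v : ℝ, u ∈ F → v ∈ F → dist (lineEmb u) (lineEmb v) ∈ Icc (0:ℝ) M := by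
      intro u v hu hv
      rw [lineEmb_dist]
      refine ⟨dist_nonneg, ?_⟩
      have h1 := hsub hu; have h2 := hsub hv
      rw [Real.dist_eq]
      exact abs_le.2 ⟨by simp only [hMdef]; linarith [h1.1, h2.2],
        by simp only [hMdef]; linarith [h1.2, h2.1]⟩
    rintro p ⟨x, ⟨x', hx', rfl⟩, y, ⟨y', hy', rfl⟩, z, ⟨z', hz', rfl⟩, rfl⟩
    exact ⟨hb _ _ hx' hy', hb _ _ hz' hy', hb _ _ hx' hz'⟩
  clear_value Δ
  have hIcc_tb : TotallyBounded ((Icc (0:ℝ) M) ×ˢ ((Icc (0:ℝ) M) ×ˢ (Icc (0:ℝ) M))) :=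
    (isCompact_Icc.prod (isCompact_Icc.prod isCompact_Icc)).totallyBounded
  -- eventual upper bound for f
  have hfub : ∀ᶠ δ in l, f δ ≤ 3 * Real.log C + 3 := by
    have hev : ∀ᶠ δ in l, δ ∈ Ioo 0 (Real.exp (-1)) :=
      Ioo_mem_nhdsGT_of_mem ⟨le_refl _, Real.exp_pos _⟩
    filter_upwards [hev] with δ hδ'
    obtain ⟨hδ0, hδe⟩ := hδ'
    have hδ1 : δ < 1 := lt_trans hδe (by
      rw [Real.exp_lt_one_iff]; norm_num)
    have hlog : 1 ≤ -Real.log δ := by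
      have h := Real.log_le_log hδ0 hδe.le
      rw [Real.log_exp] at h
      linarith
    have hlogδpos : 0 < -Real.log δ := by linarith
    have hIcccast : (covN (Icc (0:ℝ) M) δ : ℝ) ≤ C / δ := by
      have h1 := covN_Icc_le (a := (0:ℝ)) (b := M) hM hδ0
      have h2 : M / (2 * δ) + 1 ≤ C / δ := by
        rw [hC, add_div, div_div]
        have h3 : (1:ℝ) ≤ 1 / δ := by rw [le_div_iff₀ hδ0]; linarith
        linarith
      simp only [sub_zero] at h1
      linarith
    have hcovpos : (0:ℝ) < (covN Δ δ : ℝ) := by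
      exact_mod_cast one_le_covN hΔtb hΔne hδ0
    have hc1 : (covN Δ δ : ℝ) ≤ (C / δ) ^ 3 := by
      have b1 : covN Δ δ ≤ covN (Icc 0 M) δ * (covN (Icc 0 M) δ * covN (Icc 0 M) δ) := by
        refine (covN_mono hIcc_tb hΔsub hδ0).trans ?_
        refine (covN_prod_le isCompact_Icc.totallyBounded
          (isCompact_Icc.prod isCompact_Icc).totallyBounded hδ0).trans ?_
        exact Nat.mul_le_mul_left _ (covN_prod_le isCompact_Icc.totallyBounded
          isCompact_Icc.totallyBounded hδ0)
      have hccpos : (0:ℝ) ≤ (covN (Icc (0:ℝ) M) δ : ℝ) := by positivity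
      calc (covN Δ δ : ℝ)
          ≤ (covN (Icc (0:ℝ) M) δ : ℝ) * ((covN (Icc (0:ℝ) M) δ : ℝ) *
            (covN (Icc (0:ℝ) M) δ : ℝ)) := by exact_mod_cast b1
        _ ≤ (C / δ) * ((C / δ) * (C / δ)) := by
            gcongr <;> first | positivity | exact hIcccast
        _ = (C / δ) ^ 3 := by ring
    have hlog1 : Real.log (covN Δ δ) ≤ 3 * (Real.log C - Real.log δ) := by
      calc Real.log (covN Δ δ) ≤ Real.log ((C / δ) ^ 3) := Real.log_le_log hcovpos hc1
        _ = 3 * Real.log (C / δ) := by rw [Real.log_pow]; push_cast; ring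
        _ = 3 * (Real.log C - Real.log δ) := by
            rw [Real.log_div (by linarith) (ne_of_gt hδ0)]
    have hne0 : -Real.log δ ≠ 0 := ne_of_gt hlogδpos
    have hlogC : (0:ℝ) ≤ Real.log C := Real.log_nonneg hC1
    calc f δ = Real.log (covN Δ δ) / -Real.log δ := by simp only [hf]
      _ ≤ (3 * (Real.log C - Real.log δ)) / -Real.log δ := by gcongr
      _ = 3 * Real.log C / -Real.log δ + 3 := by
          rw [show 3 * (Real.log C - Real.log δ) = 3 * Real.log C + 3 * -Real.log δ by ring,
            add_div, mul_div_assoc, mul_div_assoc, div_self hne0, mul_one]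
      _ ≤ 3 * Real.log C + 3 := by
          have := div_le_self (by positivity : (0:ℝ) ≤ 3 * Real.log C) hlog
          linarith
  have hcobf : IsCoboundedUnder (· ≥ ·) l f :=
    IsBoundedUnder.isCoboundedUnder_ge ⟨3 * Real.log C + 3, by
      simpa [eventually_map] using hfub⟩
  have hfnn : ∀ᶠ δ in l, 0 ≤ f δ := by
    have hev : ∀ᶠ δ in l, δ ∈ Ioo (0:ℝ) 1 := Ioo_mem_nhdsGT_of_mem ⟨le_refl _, one_pos⟩
    filter_upwards [hev] with δ hδ'
    obtain ⟨h0, h1⟩ := hδ'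
    have hld : 0 < -Real.log δ := by have := Real.log_neg h0 h1; linarith
    have hc : (1:ℝ) ≤ (covN Δ δ : ℝ) := by exact_mod_cast one_le_covN hΔtb hΔne h0
    simp only [hf]
    exact div_nonneg (Real.log_nonneg hc) hld.le
  have hgnn : ∀ᶠ δ in l, 0 ≤ g δ := by
    have hev : ∀ᶠ δ in l, δ ∈ Ioo (0:ℝ) 1 := Ioo_mem_nhdsGT_of_mem ⟨le_refl _, one_pos⟩
    filter_upwards [hev] with δ hδ'
    obtain ⟨h0, h1⟩ := hδ'
    have hld : 0 < -Real.log δ := by have := Real.log_neg h0 h1; linarith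
    have hc : (1:ℝ) ≤ (covN F δ : ℝ) := by exact_mod_cast one_le_covN hFtb hne h0
    simp only [hg]
    exact div_nonneg (Real.log_nonneg hc) hld.le
  have hbddg : IsBoundedUnder (· ≥ ·) l g := ⟨0, by simpa [eventually_map] using hgnn⟩
  set L := liminf g l with hLdef
  clear_value L
  rcases le_or_gt L 0 with hL | hL
  · have h0f : (0:ℝ) ≤ liminf f l := le_liminf_of_le hcobf hfnn
    linarith
  by_contra hcon
  push_neg at hcon
  have htend : Tendsto (fun ε : ℝ => 2 * (L - ε) * (1 - ε)) (nhdsWithin 0 (Ioi 0)) (𝓝 (2 * L)) := by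
    have hc : ContinuousAt (fun ε : ℝ => 2 * (L - ε) * (1 - ε)) 0 := by fun_prop
    have h0 : (fun ε : ℝ => 2 * (L - ε) * (1 - ε)) 0 = 2 * L := by norm_num
    exact h0 ▸ (hc.continuousWithinAt.tendsto)
  have hev1 : ∀ᶠ ε in nhdsWithin (0:ℝ) (Ioi 0), liminf f l < 2 * (L - ε) * (1 - ε) :=
    htend.eventually (eventually_gt_nhds hcon)
  have hev2 : ∀ᶠ ε in nhdsWithin (0:ℝ) (Ioi 0), ε ∈ Ioo 0 (min L 1) :=
    Ioo_mem_nhdsGT_of_mem ⟨le_refl _, lt_min hL one_pos⟩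
  obtain ⟨ε, h1, h2⟩ := (hev1.and hev2).exists
  obtain ⟨hε0, hεm⟩ := h2
  have hεL : ε < L := lt_of_lt_of_le hεm (min_le_left _ _)
  have hε1 : ε < 1 := lt_of_lt_of_le hεm (min_le_right _ _)
  -- main estimate
  have h2δtend : Tendsto (fun δ : ℝ => 2 * δ) l l := by
    apply tendsto_nhdsWithin_of_tendsto_nhds_of_eventually_within
    · have ht : Tendsto (fun δ : ℝ => 2 * δ) (𝓝 0) (𝓝 (2 * 0)) :=
        tendsto_id.const_mul 2
      rw [mul_zero] at ht
      exact ht.mono_left nhdsWithin_le_nhds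
    · filter_upwards [self_mem_nhdsWithin] with δ hδ
      exact mul_pos two_pos (show (0:ℝ) < δ from hδ)
  have hgl : ∀ᶠ δ in l, L - ε < g (2 * δ) :=
    h2δtend.eventually (eventually_lt_of_lt_liminf (by linarith : L - ε < liminf g l) hbddg)
  have hkey : ∀ᶠ δ in l, 2 * (L - ε) * (1 - ε) ≤ f δ := by
    have hevδ : ∀ᶠ δ in l, δ ∈ Ioo 0 (min (1/2) (Real.exp (-(Real.log 2 / ε)))) :=
      Ioo_mem_nhdsGT_of_mem ⟨le_refl _, lt_min (by norm_num) (Real.exp_pos _)⟩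
    filter_upwards [hgl, hevδ] with δ hgδ hδmem
    obtain ⟨hδ0, hδlt⟩ := hδmem
    have hδhalf : δ < 1 / 2 := lt_of_lt_of_le hδlt (min_le_left _ _)
    have hδexp : δ ≤ Real.exp (-(Real.log 2 / ε)) := (lt_of_lt_of_le hδlt (min_le_right _ _)).le
    have hδ1 : δ < 1 := by linarith
    have hlogδ : 0 < -Real.log δ := by have := Real.log_neg hδ0 hδ1; linarith
    have hlog2 : Real.log 2 ≤ ε * -Real.log δ := by
      have hh := Real.log_le_log hδ0 hδexp
      rw [Real.log_exp] at hh
      have hh2 : Real.log 2 / ε ≤ -Real.log δ := by linarith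
      have := (div_le_iff₀ hε0).1 hh2
      linarith
    have h2δ1 : 2 * δ < 1 := by linarith
    have h2δ0 : 0 < 2 * δ := by linarith
    have hlog2δ : 0 < -Real.log (2 * δ) := by have := Real.log_neg h2δ0 h2δ1; linarith
    have hm1 : 1 ≤ covN F (2 * δ) := one_le_covN hFtb hne h2δ0
    have hmpos : (0:ℝ) < (covN F (2 * δ) : ℝ) := by exact_mod_cast hm1
    have hkey2 : ((covN F (2 * δ) : ℝ)) ^ 2 ≤ (covN Δ δ : ℝ) := by
      have := key_count hF hne hδ0
      rw [hΔdef]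
      exact_mod_cast this
    have hlogm : 2 * Real.log (covN F (2 * δ)) ≤ Real.log (covN Δ δ) := by
      have hh := Real.log_le_log (by positivity) hkey2
      rwa [Real.log_pow] at hh
      -- hh : Real.log (((covN F (2δ)):ℝ)^2) ≤ log covN Δ δ ... log_pow is for ^ (n:ℕ)
    have hgval : Real.log (covN F (2 * δ)) = g (2 * δ) * -Real.log (2 * δ) := by
      simp only [hg]
      rw [div_mul_cancel₀ _ (ne_of_gt hlog2δ)]
    have hstep1 : 2 * (L - ε) * -Real.log (2 * δ) ≤ 2 * Real.log (covN F (2 * δ)) := by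
      rw [hgval]
      nlinarith [hgδ, hlog2δ]
    have hstep2 : (2 * Real.log (covN F (2 * δ))) / -Real.log δ ≤ f δ := by
      simp only [hf]
      gcongr
    have hmid : (2 * (L - ε) * -Real.log (2 * δ)) / -Real.log δ
        ≤ (2 * Real.log (covN F (2 * δ))) / -Real.log δ := by gcongr
    have hfinal : 2 * (L - ε) * (1 - ε) ≤ (2 * (L - ε) * -Real.log (2 * δ)) / -Real.log δ := by
      have hsplit : Real.log (2 * δ) = Real.log 2 + Real.log δ :=
        Real.log_mul two_ne_zero (ne_of_gt hδ0)
      have hLε : (0:ℝ) ≤ L - ε := by linarith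
      rw [le_div_iff₀ hlogδ, hsplit]
      nlinarith [mul_nonneg hLε (by linarith : (0:ℝ) ≤ ε * -Real.log δ - Real.log 2)]
    linarith
  have hfin := le_liminf_of_le hcobf hkey
  linarith
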